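/- Let M be a submodule of F[x]^q with minimal Gröbner basis G = {g_1, ..., g_m}, let ℓ ∈ {1,...,m}, and let P be a property of vectors in M possessed by g_ℓ but by no element of the span of {g_i : i ≠ ℓ}. Then among all elements of M with property P, g_ℓ has minimal leading monomial; moreover every element f of M with property P and minimal leading monomial has the form f = a_ℓ g_ℓ + Σ_{i≠ℓ} a_i g_i where a_ℓ is a nonzero scalar and each a_i ∈ F[x] satisfies lm(a_i g_i) ≤ lm(g_ℓ). -/

import Mathlib

open Polynomial

open scoped Classical

/-- Support of a polynomial vector: monomials `(degree, position)` ordered lexicographically,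
which is the term-over-position (top) ordering. -/
noncomputable def vsupp {R : Type*} [CommRing R] {q : ℕ} (f : Fin q → R[X]) :
    Finset (Lex (ℕ × Fin q)) :=
  Finset.univ.biUnion fun i => (f i).support.image fun α => toLex (α, i)

/-- Leading monomial w.r.t. the top ordering (`⊥` for the zero vector). -/
noncomputable def vlm {R : Type*} [CommRing R] {q : ℕ} (f : Fin q → R[X]) :
    WithBot (Lex (ℕ × Fin q)) := (vsupp f).max

/-- Degree of the leading monomial (junk value `0` for the zero vector). -/
noncomputable def vdeg {R : Type*} [CommRing R] {q : ℕ} (f : Fin q → R[X]) : ℕ :=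
  WithBot.unbotD 0 ((vlm f).map fun m => (ofLex m).1)

/-- Leading position. -/
noncomputable def vlpos {R : Type*} [CommRing R] {q : ℕ} (f : Fin q → R[X]) : WithBot (Fin q) :=
  (vlm f).map fun m => (ofLex m).2

/-- Leading coefficient. -/
noncomputable def vlc {R : Type*} [CommRing R] {q : ℕ} (f : Fin q → R[X]) : R :=
  WithBot.unbotD 0 ((vlm f).map fun m => (f (ofLex m).2).coeff (ofLex m).1)

/-- Leading term of a polynomial vector, as a polynomial vector. -/
noncomputable def vlt {R : Type*} [CommRing R] {q : ℕ} (f : Fin q → R[X]) : Fin q → R[X] :=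
  WithBot.unbotD 0 ((vlm f).map fun m => fun j : Fin q =>
    if j = (ofLex m).2 then C ((f (ofLex m).2).coeff (ofLex m).1) * X ^ (ofLex m).1 else 0)

/-- The leading term submodule `L(F)`. -/
noncomputable def ltSubmodule {R : Type*} [CommRing R] {q : ℕ} (S : Set (Fin q → R[X])) :
    Submodule R[X] (Fin q → R[X]) :=
  Submodule.span R[X] (vlt '' S)

/-- `G` is a Gröbner basis of `M`: `G ⊆ M` and `L(G) = L(M)`. -/
def IsGroebner {R : Type*} [CommRing R] {q : ℕ} (M : Submodule R[X] (Fin q → R[X]))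
    (G : Finset (Fin q → R[X])) : Prop :=
  (G : Set (Fin q → R[X])) ⊆ M ∧
    ltSubmodule (G : Set (Fin q → R[X])) = ltSubmodule (M : Set (Fin q → R[X]))

/-- One-step reduction of `f` to `h` modulo the finite set `Fs` (Adams–Loustaunau Def. 4.1.1). -/
def ReducesOneStep {R : Type*} [CommRing R] {q : ℕ} (Fs : Finset (Fin q → R[X]))
    (f h : Fin q → R[X]) : Prop :=
  f ≠ 0 ∧ ∃ (m : ℕ) (jv : Fin m → Fin q → R[X]) (α : Fin m → ℕ) (β : Fin m → R),
    0 < m ∧ (∀ i, jv i ∈ Fs) ∧ (∀ i, jv i ≠ 0) ∧ Function.Injective jv ∧ (∀ i, β i ≠ 0) ∧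
    (∀ i, vlm f = (vlm (jv i)).map fun mm => toLex (α i + (ofLex mm).1, (ofLex mm).2)) ∧
    vlt f = ∑ i, (C (β i) * X ^ α i) • vlt (jv i) ∧
    h = f - ∑ i, (C (β i) * X ^ α i) • jv i

/-- Minimal Gröbner basis: a Gröbner basis each of whose elements is irreducible
modulo the others. -/
def IsMinimalGroebner {R : Type*} [CommRing R] {q : ℕ} (M : Submodule R[X] (Fin q → R[X]))
    (G : Finset (Fin q → R[X])) : Prop :=
  IsGroebner M G ∧ ∀ g ∈ G, ∀ h, ¬ ReducesOneStep (G.erase g) g h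

section Aux

variable {F : Type*} [Field F] {q : ℕ}

instance {q : ℕ} : WellFoundedLT (WithBot (Lex (ℕ × Fin q))) :=
  @WithBot.instWellFoundedLT (Lex (ℕ × Fin q)) _ inferInstance

/-- coefficient of a polynomial vector at a monomial -/
noncomputable def vcoeff (f : Fin q → F[X]) (μ : Lex (ℕ × Fin q)) : F :=
  (f (ofLex μ).2).coeff (ofLex μ).1

lemma mem_vsupp {f : Fin q → F[X]} {μ : Lex (ℕ × Fin q)} :
    μ ∈ vsupp f ↔ vcoeff f μ ≠ 0 := by
  simp only [vsupp, Finset.mem_biUnion, Finset.mem_univ, true_and, Finset.mem_image,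
    Polynomial.mem_support_iff, vcoeff]
  constructor
  · rintro ⟨i, α, hα, rfl⟩; simpa using hα
  · intro h; exact ⟨(ofLex μ).2, (ofLex μ).1, h, by simp⟩

lemma vcoeff_eq_zero_of_vlm_lt {f : Fin q → F[X]} {μ : Lex (ℕ × Fin q)}
    (h : vlm f < (μ : WithBot (Lex (ℕ × Fin q)))) : vcoeff f μ = 0 := by
  by_contra hc
  exact absurd (Finset.le_max (mem_vsupp.2 hc)) (not_le.2 h)

lemma vlm_lt_iff {f : Fin q → F[X]} {c : Lex (ℕ × Fin q)} :
    vlm f < (c : WithBot (Lex (ℕ × Fin q))) ↔ ∀ μ, c ≤ μ → vcoeff f μ = 0 := by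
  constructor
  · intro h μ hμ
    exact vcoeff_eq_zero_of_vlm_lt (lt_of_lt_of_le h (WithBot.coe_le_coe.2 hμ))
  · intro h
    rcases hm : (vsupp f).max with _ | μmax
    · rw [vlm, hm]; exact bot_lt_iff_ne_bot.2 (by simp)
    · rw [vlm, hm]
      refine WithBot.coe_lt_coe.2 ?_
      by_contra hc
      exact absurd (h μmax (not_lt.1 hc)) (mem_vsupp.1 (Finset.mem_of_max hm))

lemma vlm_le_iff {f : Fin q → F[X]} {c : Lex (ℕ × Fin q)} :
    vlm f ≤ (c : WithBot (Lex (ℕ × Fin q))) ↔ ∀ μ, c < μ → vcoeff f μ = 0 := by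
  constructor
  · intro h μ hμ
    exact vcoeff_eq_zero_of_vlm_lt (lt_of_le_of_lt h (WithBot.coe_lt_coe.2 hμ))
  · intro h
    rcases hm : (vsupp f).max with _ | μmax
    · rw [vlm, hm]; exact bot_le
    · rw [vlm, hm]
      refine WithBot.coe_le_coe.2 ?_
      by_contra hc
      exact absurd (h μmax (not_le.1 hc)) (mem_vsupp.1 (Finset.mem_of_max hm))

lemma vlm_zero : vlm (0 : Fin q → F[X]) = ⊥ := by
  rw [vlm]; rw [show vsupp (0 : Fin q → F[X]) = ∅ by ext μ; simp [vsupp]]; rfl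

lemma vlm_eq_bot {f : Fin q → F[X]} : vlm f = ⊥ ↔ f = 0 := by
  constructor
  · intro h
    funext j
    ext n
    have : vcoeff f (toLex (n, j)) = 0 := by
      by_contra hc
      have := Finset.le_max (mem_vsupp.2 hc)
      rw [vlm] at h; rw [h] at this; exact absurd this (by simp)
    simpa [vcoeff] using this
  · rintro rfl; exact vlm_zero

lemma vcoeff_at_vlm {f : Fin q → F[X]} {μ : Lex (ℕ × Fin q)}
    (h : vlm f = (μ : WithBot (Lex (ℕ × Fin q)))) : vcoeff f μ ≠ 0 :=
  mem_vsupp.1 (Finset.mem_of_max h)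

lemma vlm_eq_coe {f : Fin q → F[X]} {μ : Lex (ℕ × Fin q)}
    (h1 : vcoeff f μ ≠ 0) (h2 : ∀ ν, μ < ν → vcoeff f ν = 0) :
    vlm f = (μ : WithBot (Lex (ℕ × Fin q))) :=
  le_antisymm (vlm_le_iff.2 h2) (Finset.le_max (mem_vsupp.2 h1))

lemma vcoeff_sub (f₁ f₂ : Fin q → F[X]) (μ : Lex (ℕ × Fin q)) :
    vcoeff (f₁ - f₂) μ = vcoeff f₁ μ - vcoeff f₂ μ := by
  simp [vcoeff]

lemma vcoeff_sum {ι : Type*} (s : Finset ι) (h : ι → Fin q → F[X]) (μ : Lex (ℕ × Fin q)) :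
    vcoeff (∑ i ∈ s, h i) μ = ∑ i ∈ s, vcoeff (h i) μ := by
  simp [vcoeff, Finset.sum_apply, Polynomial.finset_sum_coeff]

end Aux

section Aux2

variable {F : Type*} [Field F] {q : ℕ}

lemma vlt_zero : vlt (0 : Fin q → F[X]) = 0 := by
  rw [vlt, vlm_zero]
  rfl

lemma exists_pair_of_vlm_ne_bot {f : Fin q → F[X]} (hf : f ≠ 0) :
    ∃ (D : ℕ) (J : Fin q), vlm f = ((toLex (D, J) : Lex (ℕ × Fin q)) : WithBot (Lex (ℕ × Fin q))) := by
  rcases hm : vlm f with _ | μ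
  · exact absurd (vlm_eq_bot.1 hm) hf
  · refine ⟨(ofLex μ).1, (ofLex μ).2, ?_⟩
    have he : toLex ((ofLex μ).1, (ofLex μ).2) = μ := by rw [Prod.mk.eta, toLex_ofLex]
    rw [he]
    rfl

lemma vlt_eq {f : Fin q → F[X]} {μ : Lex (ℕ × Fin q)}
    (h : vlm f = (μ : WithBot (Lex (ℕ × Fin q)))) :
    vlt f = fun j => if j = (ofLex μ).2 then C (vcoeff f μ) * X ^ (ofLex μ).1 else 0 := by
  rw [vlt, h]
  rfl

lemma vcoeff_vlt {f : Fin q → F[X]} {μ : Lex (ℕ × Fin q)}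
    (h : vlm f = (μ : WithBot (Lex (ℕ × Fin q)))) (ν : Lex (ℕ × Fin q)) :
    vcoeff (vlt f) ν = if ν = μ then vcoeff f μ else 0 := by
  rw [vcoeff, vlt_eq h]
  by_cases h2 : (ofLex ν).2 = (ofLex μ).2
  · simp only [h2, if_true, Polynomial.coeff_C_mul, Polynomial.coeff_X_pow]
    by_cases h1 : (ofLex ν).1 = (ofLex μ).1
    · have : ν = μ := by
        rw [← toLex_ofLex ν, ← toLex_ofLex μ]
        exact congrArg toLex (Prod.ext h1 h2)
      simp [this]
    · have hne : ν ≠ μ := fun hc => h1 (by rw [hc])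
      simp [hne, h1]
  · have hne : ν ≠ μ := fun hc => h2 (by rw [hc])
    simp [hne, h2]

lemma vlm_sub_vlt {f : Fin q → F[X]} {μ : Lex (ℕ × Fin q)}
    (h : vlm f = (μ : WithBot (Lex (ℕ × Fin q)))) :
    vlm (f - vlt f) < (μ : WithBot (Lex (ℕ × Fin q))) := by
  rw [vlm_lt_iff]
  intro ν hν
  rw [vcoeff_sub, vcoeff_vlt h]
  rcases eq_or_lt_of_le hν with rfl | hlt
  · simp
  · rw [if_neg (ne_of_gt hlt), vcoeff_eq_zero_of_vlm_lt (h ▸ WithBot.coe_lt_coe.2 hlt), sub_zero]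

lemma natDegree_le_of_vlm {f : Fin q → F[X]} {D : ℕ} {J : Fin q}
    (h : vlm f = ((toLex (D, J) : Lex (ℕ × Fin q)) : WithBot (Lex (ℕ × Fin q)))) (j : Fin q) :
    (f j).natDegree ≤ D := by
  rw [Polynomial.natDegree_le_iff_coeff_eq_zero]
  intro n hn
  have : vcoeff f (toLex (n, j)) = 0 := by
    apply vcoeff_eq_zero_of_vlm_lt
    rw [h]
    exact WithBot.coe_lt_coe.2 (Prod.Lex.toLex_lt_toLex.2 (Or.inl hn))
  simpa [vcoeff] using this

lemma vlm_smul {p : F[X]} (hp : p ≠ 0) (f : Fin q → F[X]) :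
    vlm (p • f) = (vlm f).map fun ν => toLex (p.natDegree + (ofLex ν).1, (ofLex ν).2) := by
  by_cases hf : f = 0
  · subst hf; rw [smul_zero, vlm_zero]; rfl
  · obtain ⟨D, J, hμ⟩ := exists_pair_of_vlm_ne_bot hf
    have hcoe : vcoeff f (toLex (D, J)) ≠ 0 := vcoeff_at_vlm hμ
    have hcDJ : (f J).coeff D ≠ 0 := hcoe
    have hdegJ : (f J).natDegree = D :=
      le_antisymm (natDegree_le_of_vlm hμ J) (Polynomial.le_natDegree_of_ne_zero hcDJ)
    rw [hμ, WithBot.map_coe]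
    simp only [ofLex_toLex]
    apply vlm_eq_coe
    · have he : vcoeff (p • f) (toLex (p.natDegree + D, J)) =
          (p * f J).coeff (p.natDegree + D) := rfl
      have h2 : (p * f J).coeff (p.natDegree + (f J).natDegree) =
          p.leadingCoeff * (f J).leadingCoeff := Polynomial.coeff_mul_degree_add_degree p (f J)
      rw [hdegJ] at h2
      rw [he, h2]
      exact mul_ne_zero (Polynomial.leadingCoeff_ne_zero.2 hp)
        (by rwa [Polynomial.leadingCoeff, hdegJ])
    · intro ν hν
      have hlt : p.natDegree + D < (ofLex ν).1 ∨
          p.natDegree + D = (ofLex ν).1 ∧ J < (ofLex ν).2 := by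
        have h' := hν
        rw [← toLex_ofLex ν] at h'
        exact Prod.Lex.toLex_lt_toLex.1 h'
      have hshow : vcoeff (p • f) ν = (p * f (ofLex ν).2).coeff (ofLex ν).1 := rfl
      rw [hshow]
      rcases hlt with h1 | ⟨h1, h2⟩
      · apply Polynomial.coeff_eq_zero_of_natDegree_lt
        calc (p * f (ofLex ν).2).natDegree ≤ p.natDegree + (f (ofLex ν).2).natDegree :=
              Polynomial.natDegree_mul_le
          _ ≤ p.natDegree + D := by gcongr; exact natDegree_le_of_vlm hμ _
          _ < (ofLex ν).1 := h1
      · by_cases hfj : f (ofLex ν).2 = 0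
        · simp [hfj]
        · have hcj : (f (ofLex ν).2).coeff D = 0 := by
            have : vcoeff f (toLex (D, (ofLex ν).2)) = 0 := by
              apply vcoeff_eq_zero_of_vlm_lt
              rw [hμ]
              exact WithBot.coe_lt_coe.2 (Prod.Lex.toLex_lt_toLex.2 (Or.inr ⟨rfl, h2⟩))
            simpa [vcoeff] using this
          have hdj : (f (ofLex ν).2).natDegree < D := by
            rcases lt_or_eq_of_le (natDegree_le_of_vlm hμ (ofLex ν).2) with h | h
            · exact h
            · have : (f (ofLex ν).2).leadingCoeff = 0 := by
                rw [Polynomial.leadingCoeff, h]; exact hcj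
              exact absurd this (Polynomial.leadingCoeff_ne_zero.2 hfj)
          apply Polynomial.coeff_eq_zero_of_natDegree_lt
          calc (p * f (ofLex ν).2).natDegree ≤ p.natDegree + (f (ofLex ν).2).natDegree :=
                Polynomial.natDegree_mul_le
            _ < p.natDegree + D := by gcongr
            _ ≤ (ofLex ν).1 := le_of_eq h1

lemma vlm_le_vlm_smul {p : F[X]} (hp : p ≠ 0) (f : Fin q → F[X]) :
    vlm f ≤ vlm (p • f) := by
  rw [vlm_smul hp]
  rcases hm : vlm f with _ | μ
  · exact bot_le
  · have he : WithBot.map (fun ν : Lex (ℕ × Fin q) =>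
        toLex (p.natDegree + (ofLex ν).1, (ofLex ν).2)) (some μ) =
        some (toLex (p.natDegree + (ofLex μ).1, (ofLex μ).2)) := rfl
    rw [he]
    refine WithBot.coe_le_coe.2 ?_
    conv_lhs => rw [← toLex_ofLex μ]
    refine Prod.Lex.toLex_le_toLex.2 ?_
    rcases Nat.eq_zero_or_pos p.natDegree with h | h
    · exact Or.inr ⟨by omega, le_refl _⟩
    · exact Or.inl (by omega)

lemma vlm_add_le (f₁ f₂ : Fin q → F[X]) : vlm (f₁ + f₂) ≤ max (vlm f₁) (vlm f₂) := by
  rcases hm : max (vlm f₁) (vlm f₂) with _ | c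
  · have h1 : vlm f₁ = ⊥ := le_bot_iff.1 ((le_max_left _ _).trans hm.le)
    have h2 : vlm f₂ = ⊥ := le_bot_iff.1 ((le_max_right _ _).trans hm.le)
    rw [vlm_eq_bot.1 h1, vlm_eq_bot.1 h2, add_zero, vlm_zero]
    exact bot_le
  · refine vlm_le_iff.2 fun ν hν => ?_
    have hcoe : ∀ fi : Fin q → F[X], vlm fi ≤ (c : WithBot (Lex (ℕ × Fin q))) →
        vcoeff fi ν = 0 := fun fi hfi =>
      vcoeff_eq_zero_of_vlm_lt (lt_of_le_of_lt hfi (WithBot.coe_lt_coe.2 hν))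
    have : vcoeff (f₁ + f₂) ν = vcoeff f₁ ν + vcoeff f₂ ν := by simp [vcoeff]
    rw [this, hcoe f₁ ((le_max_left _ _).trans hm.le), hcoe f₂ ((le_max_right _ _).trans hm.le),
      add_zero]

lemma vlm_sub_lt {f₁ f₂ : Fin q → F[X]} {c : Lex (ℕ × Fin q)}
    (h1 : vlm f₁ < (c : WithBot (Lex (ℕ × Fin q)))) (h2 : vlm f₂ < (c : WithBot (Lex (ℕ × Fin q)))) :
    vlm (f₁ - f₂) < (c : WithBot (Lex (ℕ × Fin q))) := by
  refine vlm_lt_iff.2 fun ν hν => ?_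
  rw [vcoeff_sub, vlm_lt_iff.1 h1 ν hν, vlm_lt_iff.1 h2 ν hν, sub_zero]

lemma vlm_sum_lt {ι : Type*} {s : Finset ι} {h : ι → Fin q → F[X]} {c : Lex (ℕ × Fin q)}
    (hs : ∀ i ∈ s, vlm (h i) < (c : WithBot (Lex (ℕ × Fin q)))) :
    vlm (∑ i ∈ s, h i) < (c : WithBot (Lex (ℕ × Fin q))) := by
  refine vlm_lt_iff.2 fun ν hν => ?_
  rw [vcoeff_sum]
  exact Finset.sum_eq_zero fun i hi => vlm_lt_iff.1 (hs i hi) ν hν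

end Aux2

section Division

variable {F : Type*} [Field F] {q : ℕ}

lemma division {m : ℕ} (M : Submodule (Polynomial F) (Fin q → Polynomial F))
    (g : Fin m → Fin q → Polynomial F) (hgM : ∀ i, g i ∈ M)
    (hspan : ltSubmodule ((Finset.image g Finset.univ :
        Finset (Fin q → Polynomial F)) : Set (Fin q → Polynomial F)) =
      ltSubmodule (M : Set (Fin q → Polynomial F))) :
    ∀ f ∈ M, ∃ a : Fin m → Polynomial F,
      (∀ i, vlm (a i • g i) ≤ vlm f) ∧ f = ∑ i, a i • g i := by
  suffices H : ∀ μ : WithBot (Lex (ℕ × Fin q)), ∀ f, f ∈ M → vlm f = μ →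
      ∃ a : Fin m → Polynomial F, (∀ i, vlm (a i • g i) ≤ vlm f) ∧ f = ∑ i, a i • g i by
    intro f hf; exact H (vlm f) f hf rfl
  intro μ
  induction μ using WellFoundedLT.induction with
  | _ μ ih =>
  intro f hfM hμeq
  by_cases hf0 : f = 0
  · subst hf0
    exact ⟨0, fun i => by rw [Pi.zero_apply, zero_smul], by simp⟩
  obtain ⟨D, J, hμf⟩ := exists_pair_of_vlm_ne_bot hf0
  set μf : Lex (ℕ × Fin q) := toLex (D, J) with hμfdef
  have hμμ : μ = (μf : WithBot (Lex (ℕ × Fin q))) := by rw [← hμeq, hμf]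
  -- span membership of the leading term
  have hmem : vlt f ∈ ltSubmodule (M : Set (Fin q → Polynomial F)) :=
    Submodule.subset_span ⟨f, hfM, rfl⟩
  rw [← hspan] at hmem
  have hmem2 : vlt f ∈ Submodule.span (Polynomial F) (Set.range fun i => vlt (g i)) := by
    have hs : vlt '' ((Finset.image g Finset.univ :
        Finset (Fin q → Polynomial F)) : Set (Fin q → Polynomial F))
        = Set.range fun i => vlt (g i) := by
      rw [Finset.coe_image, Finset.coe_univ, Set.image_univ, ← Set.range_comp]
      rfl
    rwa [ltSubmodule, hs] at hmem
  obtain ⟨c, hc⟩ := (Submodule.mem_span_range_iff_exists_fun (Polynomial F)).mp hmem2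
  -- per-index monomial coefficients
  have key : ∀ i, ∃ b : Polynomial F,
      (b • vlt (g i) =
        fun j => if j = J then C ((c i * (vlt (g i)) J).coeff D) * X ^ D else 0) ∧
      vlm (b • g i) ≤ (μf : WithBot (Lex (ℕ × Fin q))) ∧
      vlm (b • (g i - vlt (g i))) < (μf : WithBot (Lex (ℕ × Fin q))) := by
    intro i
    by_cases hgi : g i = 0
    · refine ⟨0, ?_, ?_, ?_⟩
      · funext j
        rw [hgi, vlt_zero]
        simp
      · rw [zero_smul, vlm_zero]; exact bot_le
      · rw [zero_smul, vlm_zero]; exact WithBot.bot_lt_coe _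
    obtain ⟨d, Ji, hν⟩ := exists_pair_of_vlm_ne_bot hgi
    have hvlt : vlt (g i) =
        fun j => if j = Ji then C (vcoeff (g i) (toLex (d, Ji))) * X ^ d else 0 := by
      have h' := vlt_eq hν
      convert h' <;> rfl
    set ci := vcoeff (g i) (toLex (d, Ji)) with hci
    by_cases hJJ : Ji = J
    · have hJ' : J = Ji := hJJ.symm
      by_cases hdD : d ≤ D
      · -- the interesting case
        set cc := (c i).coeff (D - d) with hcc
        have hXpow : (X : Polynomial F) ^ (D - d) * X ^ d = X ^ D := by
          rw [← pow_add, Nat.sub_add_cancel hdD]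
        have hvJ : vlt (g i) J = C ci * X ^ d := (congrFun hvlt J).trans (if_pos hJ')
        have hcoeff : (c i * (C ci * X ^ d)).coeff D = cc * ci := by
          rw [← mul_assoc, Polynomial.coeff_mul_X_pow', if_pos hdD,
            Polynomial.coeff_mul_C, hcc]
        refine ⟨C cc * X ^ (D - d), ?_, ?_, ?_⟩
        · funext j
          have happ : ((C cc * X ^ (D - d)) • vlt (g i)) j
              = (C cc * X ^ (D - d)) * (vlt (g i) j) := rfl
          rw [happ]
          by_cases hj : j = J
          · have hvj : vlt (g i) j = C ci * X ^ d :=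
              (congrFun hvlt j).trans (if_pos (hj.trans hJ'))
            rw [if_pos hj, hvj, hvJ, hcoeff]
            calc C cc * X ^ (D - d) * (C ci * X ^ d)
                = C cc * C ci * (X ^ (D - d) * X ^ d) := by ring
              _ = C (cc * ci) * X ^ D := by rw [hXpow, Polynomial.C_mul]
          · have hvj : vlt (g i) j = 0 :=
              (congrFun hvlt j).trans (if_neg (fun h => hj (h.trans hJJ)))
            rw [if_neg hj, hvj, mul_zero]
        · by_cases hb0 : cc = 0
          · rw [hb0, map_zero, zero_mul, zero_smul, vlm_zero]; exact bot_le
          · have hbne : (C cc * X ^ (D - d) : Polynomial F) ≠ 0 :=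
              mul_ne_zero (Polynomial.C_ne_zero.mpr hb0) (pow_ne_zero _ Polynomial.X_ne_zero)
            have h1 : vlm ((C cc * X ^ (D - d)) • g i)
                = some (toLex ((C cc * X ^ (D - d) : Polynomial F).natDegree + d, Ji)) := by
              rw [vlm_smul hbne, hν]; rfl
            rw [h1, Polynomial.natDegree_C_mul_X_pow (D - d) cc hb0, Nat.sub_add_cancel hdD,
              hJJ]
            exact le_refl _
        · by_cases hb0 : cc = 0
          · rw [hb0, map_zero, zero_mul, zero_smul, vlm_zero]; exact WithBot.bot_lt_coe _
          by_cases hz : g i - vlt (g i) = 0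
          · rw [hz, smul_zero, vlm_zero]; exact WithBot.bot_lt_coe _
          have hbne : (C cc * X ^ (D - d) : Polynomial F) ≠ 0 :=
            mul_ne_zero (Polynomial.C_ne_zero.mpr hb0) (pow_ne_zero _ Polynomial.X_ne_zero)
          obtain ⟨d', j', hν'⟩ := exists_pair_of_vlm_ne_bot hz
          have hlt : (toLex (d', j') : Lex (ℕ × Fin q)) < toLex (d, Ji) := by
            have hlt' := vlm_sub_vlt hν
            rw [hν'] at hlt'
            exact WithBot.coe_lt_coe.1 hlt'
          have h1 : vlm ((C cc * X ^ (D - d)) • (g i - vlt (g i)))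
              = some (toLex ((C cc * X ^ (D - d) : Polynomial F).natDegree + d', j')) := by
            rw [vlm_smul hbne, hν']; rfl
          rw [h1, Polynomial.natDegree_C_mul_X_pow (D - d) cc hb0]
          refine WithBot.coe_lt_coe.2 ?_
          rcases Prod.Lex.toLex_lt_toLex.1 hlt with hd' | ⟨hd', hj'⟩
          · exact Prod.Lex.toLex_lt_toLex.2 (Or.inl (by omega))
          · exact Prod.Lex.toLex_lt_toLex.2 (Or.inr ⟨by omega, hJJ ▸ hj'⟩)
      · -- d > D : the coefficient is zero
        have hvJ : vlt (g i) J = C ci * X ^ d := (congrFun hvlt J).trans (if_pos hJ')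
        have hcoeffD : (c i * (vlt (g i) J)).coeff D = 0 := by
          rw [hvJ, ← mul_assoc, Polynomial.coeff_mul_X_pow', if_neg hdD]
        refine ⟨0, ?_, ?_, ?_⟩
        · funext j
          rw [hcoeffD]
          simp
        · rw [zero_smul, vlm_zero]; exact bot_le
        · rw [zero_smul, vlm_zero]; exact WithBot.bot_lt_coe _
    · -- leading position differs from J
      have hvJ : vlt (g i) J = 0 := (congrFun hvlt J).trans (if_neg (fun h => hJJ h.symm))
      refine ⟨0, ?_, ?_, ?_⟩
      · funext j
        rw [hvJ, mul_zero]
        simp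
      · rw [zero_smul, vlm_zero]; exact bot_le
      · rw [zero_smul, vlm_zero]; exact WithBot.bot_lt_coe _
  choose b hb1 hb2 hb3 using key
  have hvltf : vlt f = fun j => if j = J then C (vcoeff f μf) * X ^ D else 0 := by
    have h' := vlt_eq hμf
    convert h' <;> rfl
  have hsum1 : ∑ i, b i • vlt (g i) = vlt f := by
    funext j
    rw [Finset.sum_apply]
    by_cases hj : j = J
    · rw [hj]
      calc ∑ i, (b i • vlt (g i)) J
          = ∑ i, C ((c i * (vlt (g i)) J).coeff D) * X ^ D :=
            Finset.sum_congr rfl fun i _ => (congrFun (hb1 i) J).trans (if_pos rfl)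
        _ = C ((∑ i, c i * (vlt (g i)) J).coeff D) * X ^ D := by
            rw [Polynomial.finset_sum_coeff, map_sum, Finset.sum_mul]
        _ = C ((vlt f J).coeff D) * X ^ D := by
            have hs : (∑ i, c i • vlt (g i)) J = ∑ i, c i * (vlt (g i)) J := by
              rw [Finset.sum_apply]; rfl
            rw [← hs, hc]
        _ = vlt f J := by
            have hvJ : vlt f J = C (vcoeff f μf) * X ^ D :=
              (congrFun hvltf J).trans (if_pos rfl)
            rw [hvJ, Polynomial.coeff_C_mul, Polynomial.coeff_X_pow, if_pos rfl, mul_one]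
    · rw [Finset.sum_eq_zero fun i _ => (congrFun (hb1 i) j).trans (if_neg hj)]
      exact ((congrFun hvltf j).trans (if_neg hj)).symm
  have hrest : f - ∑ i, b i • g i = (f - vlt f) - ∑ i, b i • (g i - vlt (g i)) := by
    rw [Finset.sum_congr rfl (fun i _ => smul_sub (b i) (g i) (vlt (g i))),
      Finset.sum_sub_distrib, hsum1]
    abel
  have hflt : vlm (f - ∑ i, b i • g i) < (μf : WithBot (Lex (ℕ × Fin q))) := by
    rw [hrest]
    exact vlm_sub_lt (vlm_sub_vlt hμf) (vlm_sum_lt fun i _ => hb3 i)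
  have hfM' : f - ∑ i, b i • g i ∈ M :=
    M.sub_mem hfM (Submodule.sum_mem M fun i _ => M.smul_mem _ (hgM i))
  obtain ⟨a', ha'1, ha'2⟩ := ih (vlm (f - ∑ i, b i • g i)) (hμμ ▸ hflt) _ hfM' rfl
  refine ⟨fun i => b i + a' i, ?_, ?_⟩
  · intro i
    rw [add_smul]
    refine (vlm_add_le _ _).trans (max_le ?_ ?_)
    · rw [hμf]; exact hb2 i
    · exact (ha'1 i).trans (le_of_lt (by rw [hμf]; exact hflt))
  · have hsplit : ∑ i, (b i + a' i) • g i = ∑ i, b i • g i + ∑ i, a' i • g i := by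
      rw [← Finset.sum_add_distrib]
      exact Finset.sum_congr rfl fun i _ => add_smul _ _ _
    rw [hsplit, ← ha'2]
    abel

end Division


/-- Let `G = {g_1,…,g_m}` be a minimal Gröbner basis of `M ⊆ F[x]^q`, and let `P` be a property
possessed by `g_ℓ` but by no element of the span of the remaining basis vectors. Then `g_ℓ` has
minimal leading monomial among all elements of `M` with property `P`, and every minimal such `f`
has the form `f = a_ℓ g_ℓ + ∑_{i ≠ ℓ} a_i g_i` with `a_ℓ` a nonzero scalar and
`lm (a_i g_i) ≤ lm (g_ℓ)` for `i ≠ ℓ`. -/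
theorem minimal_with_property_param {F : Type*} [Field F] {q m : ℕ}
    (M : Submodule (Polynomial F) (Fin q → Polynomial F))
    (g : Fin m → Fin q → Polynomial F) (hginj : Function.Injective g)
    (hGB : IsMinimalGroebner M (Finset.image g Finset.univ))
    (P : (Fin q → Polynomial F) → Prop) (ℓ : Fin m)
    (hPg : P (g ℓ))
    (hPnot : ∀ f ∈ Submodule.span (Polynomial F) (g '' {i : Fin m | i ≠ ℓ}), ¬ P f) :
    (∀ f ∈ M, P f → vlm (g ℓ) ≤ vlm f) ∧
    (∀ f ∈ M, P f → (∀ f' ∈ M, P f' → vlm f ≤ vlm f') →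
      ∃ (aℓ : F) (a : Fin m → Polynomial F), aℓ ≠ 0 ∧
        (∀ i, i ≠ ℓ → vlm (a i • g i) ≤ vlm (g ℓ)) ∧
        f = (C aℓ) • g ℓ + ∑ i ∈ Finset.univ.filter (· ≠ ℓ), a i • g i) := by
  obtain ⟨⟨hGsub, hGspan⟩, -⟩ := hGB
  have hgM : ∀ i, g i ∈ M := fun i => hGsub (by simp [Finset.mem_coe])
  have hdiv := division M g hgM hGspan
  have haℓ : ∀ f, P f → ∀ a : Fin m → Polynomial F, f = ∑ i, a i • g i → a ℓ ≠ 0 := by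
    intro f hPf a hfa h0
    refine hPnot f ?_ hPf
    rw [hfa]
    refine Submodule.sum_mem _ fun i _ => ?_
    by_cases hi : i = ℓ
    · rw [hi, h0, zero_smul]; exact Submodule.zero_mem _
    · exact Submodule.smul_mem _ _ (Submodule.subset_span ⟨i, hi, rfl⟩)
  constructor
  · intro f hf hPf
    obtain ⟨a, h1, h2⟩ := hdiv f hf
    have hne := haℓ f hPf a h2
    exact (vlm_le_vlm_smul hne (g ℓ)).trans (h1 ℓ)
  · intro f hf hPf hmin
    obtain ⟨a, h1, h2⟩ := hdiv f hf
    have hne := haℓ f hPf a h2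
    have hgℓ : g ℓ ≠ 0 := by
      intro h
      exact hPnot 0 (Submodule.zero_mem _) (h ▸ hPg)
    have heq : vlm f = vlm (g ℓ) :=
      le_antisymm (hmin (g ℓ) (hgM ℓ) hPg)
        ((vlm_le_vlm_smul hne (g ℓ)).trans (h1 ℓ))
    obtain ⟨d, J, hν⟩ := exists_pair_of_vlm_ne_bot hgℓ
    have hsm : vlm (a ℓ • g ℓ) = some (toLex ((a ℓ).natDegree + d, J)) := by
      rw [vlm_smul hne, hν]; rfl
    have hle : vlm (a ℓ • g ℓ) ≤ vlm (g ℓ) := (h1 ℓ).trans heq.le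
    rw [hsm, hν] at hle
    have hdeg0 : (a ℓ).natDegree = 0 := by
      rcases Prod.Lex.toLex_le_toLex.1 (WithBot.coe_le_coe.1 hle) with h | ⟨h, -⟩
      · simp only at h; omega
      · simp only at h; omega
    have hC : a ℓ = C ((a ℓ).coeff 0) :=
      Polynomial.eq_C_of_natDegree_le_zero (le_of_eq hdeg0)
    refine ⟨(a ℓ).coeff 0, a, ?_, ?_, ?_⟩
    · intro h
      exact hne (by rw [hC, h, map_zero])
    · intro i hi
      exact (h1 i).trans heq.le
    · rw [h2, ← hC, Finset.filter_ne', ← Finset.add_sum_erase Finset.univ _ (Finset.mem_univ ℓ)]
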